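/- Let f₁,...,fₙ : [0,1] → ℝ be non-decreasing differentiable functions, define x(b) = ∑ᵢ fᵢ(bᵢ) and p(b) = ∑ᵢ (bᵢ·fᵢ(bᵢ) − ∫₀^{bᵢ} fᵢ(z)dz). Then for each agent i with value vᵢ ∈ [0,1] and each fixed b₋ᵢ, the utility uᵢ(bᵢ) = vᵢ·x(bᵢ,b₋ᵢ) − p(bᵢ,b₋ᵢ) is maximized at bᵢ = vᵢ. -/

import Mathlib

open Finset

lemma aux_int_ineq {g : ℝ → ℝ} (hg : MonotoneOn g (Set.Icc 0 1))
    {v t : ℝ} (hv : v ∈ Set.Icc (0:ℝ) 1) (ht : t ∈ Set.Icc (0:ℝ) 1) :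
    (v - t) * g t ≤ ∫ z in t..v, g z := by
  rcases le_or_gt t v with h | h
  · have hint : IntervalIntegrable g MeasureTheory.volume t v :=
      (hg.mono (Set.uIcc_subset_Icc ht hv)).intervalIntegrable
    have hle : ∫ z in t..v, (fun _ => g t) z ≤ ∫ z in t..v, g z := by
      apply intervalIntegral.integral_mono_on h intervalIntegrable_const hint
      intro z hz
      exact hg ht ⟨le_trans ht.1 hz.1, le_trans hz.2 hv.2⟩ hz.1
    simpa [mul_comm] using hle
  · have hint : IntervalIntegrable g MeasureTheory.volume v t :=
      (hg.mono (Set.uIcc_subset_Icc hv ht)).intervalIntegrable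
    have hle : ∫ z in v..t, g z ≤ ∫ z in v..t, (fun _ => g t) z := by
      apply intervalIntegral.integral_mono_on h.le hint intervalIntegrable_const
      intro z hz
      exact hg ⟨le_trans hv.1 hz.1, le_trans hz.2 ht.2⟩ ht hz.2
    rw [intervalIntegral.integral_symm]
    simp only [intervalIntegral.integral_const, smul_eq_mul] at hle
    nlinarith


theorem stmt_14 (n : ℕ) (f : Fin n → ℝ → ℝ)
    (hmono : ∀ i, MonotoneOn (f i) (Set.Icc 0 1))
    (hdiff : ∀ i, DifferentiableOn ℝ (f i) (Set.Icc 0 1))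
    (x : (Fin n → ℝ) → ℝ) (hx : ∀ b, x b = ∑ i, f i (b i))
    (p : (Fin n → ℝ) → ℝ)
    (hp : ∀ b, p b = ∑ i, (b i * f i (b i) - ∫ z in (0:ℝ)..(b i), f i z)) :
    ∀ (i : Fin n) (v : ℝ), v ∈ Set.Icc (0:ℝ) 1 →
      ∀ (b : Fin n → ℝ) (t : ℝ), t ∈ Set.Icc (0:ℝ) 1 →
        v * x (Function.update b i t) - p (Function.update b i t)
          ≤ v * x (Function.update b i v) - p (Function.update b i v) := by
  intro i v hv b t ht
  have key : ∀ c : ℝ, v * x (Function.update b i c) - p (Function.update b i c)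
      = (v * f i c - (c * f i c - ∫ z in (0:ℝ)..c, f i z))
        + ∑ j ∈ univ.erase i, (v * f j (b j) - (b j * f j (b j) - ∫ z in (0:ℝ)..(b j), f j z)) := by
    intro c
    rw [hx, hp, Finset.mul_sum, ← Finset.sum_sub_distrib,
      ← Finset.add_sum_erase _ _ (mem_univ i)]
    congr 1
    · simp
    · apply Finset.sum_congr rfl
      intro j hj
      rw [Function.update_of_ne (Finset.ne_of_mem_erase hj)]
  rw [key t, key v]
  apply add_le_add_left
  have hii : (v - t) * f i t ≤ ∫ z in t..v, f i z := aux_int_ineq (hmono i) hv ht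
  have hsplit : (∫ z in (0:ℝ)..v, f i z) = (∫ z in (0:ℝ)..t, f i z) + ∫ z in t..v, f i z := by
    rw [intervalIntegral.integral_add_adjacent_intervals]
    · exact ((hmono i).mono (Set.uIcc_subset_Icc (Set.mem_Icc.mpr ⟨le_refl 0, zero_le_one⟩) ht)).intervalIntegrable
    · exact ((hmono i).mono (Set.uIcc_subset_Icc ht hv)).intervalIntegrable
  nlinarith [hii]
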